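/- For every integer τ with 0 ≤ τ ≤ N − 1, R_{T^(2)}(τ) = R_{T^(1)}(τ); that is, T^(2) has the same periodic autocorrelation as T^(1). -/

import Mathlib

/-- The geometric sequence of the first type: `t¹ₙ = 1` iff the Legendre symbol of
`Tr(ω^n)` is `-1`, and `0` otherwise (i.e. when the symbol is `0` or `1`). -/
noncomputable def ntuT1 (p : ℕ) [Fact p.Prime] {F : Type} [Field F]
    [Algebra (ZMod p) F] (ω : F) (n : ℕ) : ZMod 2 :=
  if legendreSym p ((Algebra.trace (ZMod p) F (ω ^ n)).val : ℤ) = -1 then 1 else 0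

/-- The geometric sequence of the second type: `t²ₙ = 0` iff the Legendre symbol of
`Tr(ω^n)` is `1`, and `1` otherwise (i.e. when the symbol is `0` or `-1`). -/
noncomputable def ntuT2 (p : ℕ) [Fact p.Prime] {F : Type} [Field F]
    [Algebra (ZMod p) F] (ω : F) (n : ℕ) : ZMod 2 :=
  if legendreSym p ((Algebra.trace (ZMod p) F (ω ^ n)).val : ℤ) = 1 then 0 else 1

/-- Periodic cross-correlation at shift `τ` of two `N`-periodic binary sequences:
`R_{s,s'}(τ) = Σ_{i=0}^{N-1} (-1)^{s_i + s'_{i+τ}}`, indices taken modulo `N`. -/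
def pcorr (N : ℕ) (s s' : ℕ → ZMod 2) (τ : ℤ) : ℤ :=
  ∑ i ∈ Finset.range N, (-1 : ℤ) ^ ((s i + s' ((((i : ℤ) + τ) % (N : ℤ)).toNat)).val)

/-- The interleaved sequence of `t` and the left shift by `e` of `u`:
`n = 2j ↦ t j`, `n = 2j+1 ↦ u (j + e)`. -/
def ntuInterleave (t u : ℕ → ZMod 2) (e : ℕ) (n : ℕ) : ZMod 2 :=
  if n % 2 = 0 then t (n / 2) else u (n / 2 + e)

lemma ntu_key (u v : ℤ) (hu : u = -1 ∨ u = 0 ∨ u = 1) (hv : v = -1 ∨ v = 0 ∨ v = 1) :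
    ((if u = 1 then (1:ℤ) else -1) * (if v = 1 then (1:ℤ) else -1)
      - (if u = -1 then (-1:ℤ) else 1) * (if v = -1 then (-1:ℤ) else 1))
    + ((if -u = 1 then (1:ℤ) else -1) * (if -v = 1 then (1:ℤ) else -1)
      - (if -u = -1 then (-1:ℤ) else 1) * (if -v = -1 then (-1:ℤ) else 1)) = 0 := by
  rcases hu with rfl | rfl | rfl <;> rcases hv with rfl | rfl | rfl <;> norm_num

lemma ntu_neg_pow (x y : ZMod 2) :
    (-1 : ℤ) ^ ((x + y).val) = (-1 : ℤ) ^ x.val * (-1 : ℤ) ^ y.val := by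
  revert x y; decide

theorem stmt2 (p m : ℕ) [Fact p.Prime] (hp2 : p ≠ 2) (hm : 1 < m)
    (F : Type) [Field F] [Fintype F] [Algebra (ZMod p) F]
    (hcard : Fintype.card F = p ^ m) (ω : F) (hω : orderOf ω = p ^ m - 1)
    (N : ℕ) (hN : N = 2 * (p ^ m - 1) / (p - 1)) (τ : ℤ) (hτ0 : 0 ≤ τ) (hτ1 : τ ≤ (N : ℤ) - 1) :
    pcorr N (ntuT2 p ω) (ntuT2 p ω) τ = pcorr N (ntuT1 p ω) (ntuT1 p ω) τ := by
  classical
  have hp : p.Prime := Fact.out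
  have hp3 : 3 ≤ p := by
    rcases hp.two_le.lt_or_eq with h | h
    · omega
    · omega
  have hpm : p ^ 2 ≤ p ^ m := Nat.pow_le_pow_right hp.pos hm
  have hpm1 : 9 ≤ p ^ m := le_trans (by nlinarith) hpm
  set d : ℕ := (p ^ m - 1) / (p - 1) with hd
  have hdvd : (p - 1) ∣ (p ^ m - 1) := by
    have := Nat.sub_dvd_pow_sub_pow p 1 m
    simpa using this
  have hdmul : d * (p - 1) = p ^ m - 1 := Nat.div_mul_cancel hdvd
  have hN2 : N = 2 * d := by rw [hN, hd, Nat.mul_div_assoc 2 hdvd]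
  have hd0 : 0 < d := by
    rcases Nat.eq_zero_or_pos d with h | h
    · rw [h] at hdmul; omega
    · exact h
  have hN0 : 0 < N := by omega
  -- ω basics
  have hω1 : ω ^ (p ^ m - 1) = 1 := by rw [← hω]; exact pow_orderOf_eq_one ω
  have hωne : ω ≠ 0 := by
    intro h
    rw [h, zero_pow (by omega : p ^ m - 1 ≠ 0)] at hω1
    exact zero_ne_one hω1
  -- find c₀ : ZMod p with algebraMap c₀ = ω ^ d
  have hinj : Function.Injective (algebraMap (ZMod p) F) := (algebraMap (ZMod p) F).injective
  have hp1pos : 0 < p - 1 := by omega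
  set S : Finset F :=
    Finset.univ.image (fun u : (ZMod p)ˣ => algebraMap (ZMod p) F (u : ZMod p)) with hS
  have hScard : S.card = p - 1 := by
    rw [hS, Finset.card_image_of_injective _
      (fun a b h => Units.ext (hinj h)), Finset.card_univ, ZMod.card_units p]
  have hsub : S ⊆ Polynomial.nthRootsFinset (p - 1) (1 : F) := by
    intro x hx
    rw [hS, Finset.mem_image] at hx
    obtain ⟨u, -, rfl⟩ := hx
    rw [Polynomial.mem_nthRootsFinset hp1pos, ← map_pow,
      ZMod.pow_card_sub_one_eq_one u.ne_zero, map_one]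
  have hcardle : (Polynomial.nthRootsFinset (p - 1) (1 : F)).card ≤ p - 1 := by
    rw [Polynomial.nthRootsFinset_def]
    exact le_trans (Multiset.toFinset_card_le _) (by simpa using Polynomial.card_nthRoots (p - 1) (1 : F))
  have hSeq : S = Polynomial.nthRootsFinset (p - 1) (1 : F) :=
    Finset.eq_of_subset_of_card_le hsub (by rw [hScard]; exact hcardle)
  have hmem : ω ^ d ∈ Polynomial.nthRootsFinset (p - 1) (1 : F) := by
    rw [Polynomial.mem_nthRootsFinset hp1pos, ← pow_mul, hdmul, hω1]
  rw [← hSeq, hS, Finset.mem_image] at hmem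
  obtain ⟨u, -, hu⟩ := hmem
  set c₀ : ZMod p := (u : ZMod p) with hc₀
  -- c₀ is not a square
  have hns : ¬ IsSquare c₀ := by
    rintro ⟨r, hr⟩
    have hrne : r ≠ 0 := by
      rintro rfl
      rw [mul_zero] at hr
      have : ω ^ d = 0 := by rw [← hu, hr, map_zero]
      exact pow_ne_zero d hωne this
    have he2 : 2 * ((p - 1) / 2) = p - 1 := by
      have : Odd p := hp.odd_of_ne_two hp2
      obtain ⟨k, hk⟩ := this
      omega
    have hpow : (ω ^ d) ^ ((p - 1) / 2) = 1 := by
      rw [← hu, ← map_pow, hr, ← pow_two, ← pow_mul]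
      rw [show 2 * ((p - 1) / 2) = p - 1 from he2]
      rw [ZMod.pow_card_sub_one_eq_one hrne, map_one]
    have hdvd2 : orderOf ω ∣ d * ((p - 1) / 2) := by
      apply orderOf_dvd_of_pow_eq_one
      rw [pow_mul]; exact hpow
    rw [hω] at hdvd2
    have hde : 2 * (d * ((p - 1) / 2)) = p ^ m - 1 := by
      rw [show 2 * (d * ((p - 1) / 2)) = d * (2 * ((p - 1) / 2)) by ring, he2, hdmul]
    have hdepos : 0 < d * ((p - 1) / 2) := Nat.mul_pos hd0 (by omega)
    have := Nat.le_of_dvd hdepos hdvd2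
    omega
  set χ := quadraticChar (ZMod p) with hχ
  have hχc : χ c₀ = -1 := quadraticChar_neg_one_iff_not_isSquare.mpr hns
  set L : ℕ → ℤ := fun n => χ (Algebra.trace (ZMod p) F (ω ^ n)) with hL
  have hleg : ∀ x : ZMod p, legendreSym p ((x.val : ℤ)) = χ x := by
    intro x
    rw [legendreSym, hχ]
    congr 1
    push_cast
    simp [ZMod.natCast_val, ZMod.cast_id]
  -- trace flip
  have hTr : ∀ n, Algebra.trace (ZMod p) F (ω ^ (n + d))
      = c₀ * Algebra.trace (ZMod p) F (ω ^ n) := by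
    intro n
    rw [pow_add, ← hu, mul_comm, ← Algebra.smul_def, map_smul, smul_eq_mul]
  -- L flips under shift by d, has period N
  have hLflip : ∀ n, L (n + d) = - L n := by
    intro n
    rw [hL]
    simp only [hTr n, map_mul, hχc]
    ring
  have hLperiod : ∀ n, L (n + N) = L n := by
    intro n
    have h1 : n + N = (n + d) + d := by omega
    rw [h1, hLflip, hLflip, neg_neg]
  have hLadd : ∀ k n, L (n + N * k) = L n := by
    intro k
    induction k with
    | zero => intro n; simp
    | succ k ih =>
      intro n
      have h1 : n + N * (k + 1) = (n + N * k) + N := by ring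
      rw [h1, hLperiod, ih]
  have hLmod : ∀ n, L (n % N) = L n := by
    intro n
    conv_rhs => rw [← Nat.mod_add_div n N]
    exact (hLadd _ _).symm
  have hLval : ∀ n, L n = -1 ∨ L n = 0 ∨ L n = 1 := by
    intro n
    by_cases h : Algebra.trace (ZMod p) F (ω ^ n) = 0
    · right; left; rw [hL]; simp only [h]; exact quadraticChar_zero
    · rcases quadraticChar_dichotomy h with h1 | h1
      · right; right; exact h1
      · left; exact h1
  -- the ±1 sequences
  set a : ℕ → ℤ := fun n => if L n = -1 then -1 else 1 with haa
  set b : ℕ → ℤ := fun n => if L n = 1 then 1 else -1 with hbb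
  have ha : ∀ n, (-1 : ℤ) ^ ((ntuT1 p ω n).val) = a n := by
    intro n
    have hfold : χ (Algebra.trace (ZMod p) F (ω ^ n)) = L n := rfl
    rw [ntuT1, hleg, hfold, haa]
    by_cases h : L n = -1 <;> simp [h, ZMod.val_one]
  have hb : ∀ n, (-1 : ℤ) ^ ((ntuT2 p ω n).val) = b n := by
    intro n
    have hfold : χ (Algebra.trace (ZMod p) F (ω ^ n)) = L n := rfl
    rw [ntuT2, hleg, hfold, hbb]
    by_cases h : L n = 1 <;> simp [h, ZMod.val_one]
  set σ : ℕ → ℕ := fun i => (((i : ℤ) + τ) % (N : ℤ)).toNat with hσdef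
  have hsum1 : pcorr N (ntuT1 p ω) (ntuT1 p ω) τ = ∑ i ∈ Finset.range N, a i * a (σ i) := by
    rw [pcorr]
    refine Finset.sum_congr rfl fun i _ => ?_
    rw [ntu_neg_pow, ha, ha]
  have hsum2 : pcorr N (ntuT2 p ω) (ntuT2 p ω) τ = ∑ i ∈ Finset.range N, b i * b (σ i) := by
    rw [pcorr]
    refine Finset.sum_congr rfl fun i _ => ?_
    rw [ntu_neg_pow, hb, hb]
  -- shift of σ
  have hσd : ∀ i : ℕ, σ (i + d) = (σ i + d) % N := by
    intro i
    have hNne : (N : ℤ) ≠ 0 := by exact_mod_cast hN0.ne'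
    have h1 : (((i + d : ℕ) : ℤ) + τ) % (N : ℤ)
        = ((((i : ℤ) + τ) % (N : ℤ)) + (d : ℤ)) % (N : ℤ) := by
      push_cast
      rw [show (i:ℤ) + (d:ℤ) + τ = ((i:ℤ) + τ) + (d:ℤ) by ring]
      rw [Int.add_emod ((i:ℤ) + τ) (d:ℤ), Int.add_emod (((i:ℤ) + τ) % (N:ℤ)) (d:ℤ),
        Int.emod_emod_of_dvd _ dvd_rfl]
    have h2 : (((i : ℤ) + τ) % (N : ℤ)) = (σ i : ℤ) := by
      rw [hσdef]
      exact (Int.toNat_of_nonneg (Int.emod_nonneg _ hNne)).symm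
    rw [hσdef]
    simp only []
    rw [h1, h2]
    rw [show ((σ i : ℤ) + (d : ℤ)) % (N : ℤ) = (((σ i + d) % N : ℕ) : ℤ) by push_cast; ring]
    exact Int.toNat_natCast _
  have hLσ : ∀ i : ℕ, L (σ (i + d)) = - L (σ i) := by
    intro i
    rw [hσd i, hLmod, hLflip]
  -- final computation
  rw [hsum1, hsum2, ← sub_eq_zero, ← Finset.sum_sub_distrib]
  have hsplit : ∀ f : ℕ → ℤ, ∑ i ∈ Finset.range N, f i
      = ∑ i ∈ Finset.range d, f i + ∑ i ∈ Finset.range d, f (i + d) := by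
    intro f
    rw [hN2, two_mul, Finset.sum_range_add]
    congr 1
    exact Finset.sum_congr rfl fun i _ => by rw [Nat.add_comm]
  rw [hsplit, ← Finset.sum_add_distrib]
  apply Finset.sum_eq_zero
  intro i _
  have e1 : b i = if L i = 1 then (1:ℤ) else -1 := rfl
  have e2 : a i = if L i = -1 then (-1:ℤ) else 1 := rfl
  have e3 : b (σ i) = if L (σ i) = 1 then (1:ℤ) else -1 := rfl
  have e4 : a (σ i) = if L (σ i) = -1 then (-1:ℤ) else 1 := rfl
  have e5 : b (i + d) = if -L i = 1 then (1:ℤ) else -1 := by rw [hbb]; simp only [hLflip]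
  have e6 : a (i + d) = if -L i = -1 then (-1:ℤ) else 1 := by rw [haa]; simp only [hLflip]
  have e7 : b (σ (i + d)) = if -L (σ i) = 1 then (1:ℤ) else -1 := by
    rw [hbb]; simp only [hLσ]
  have e8 : a (σ (i + d)) = if -L (σ i) = -1 then (-1:ℤ) else 1 := by
    rw [haa]; simp only [hLσ]
  rw [e1, e2, e3, e4, e5, e6, e7, e8]
  exact ntu_key (L i) (L (σ i)) (hLval i) (hLval (σ i))
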